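/- Let S be an n-simplex with faces S^i, and let {B^α : α ∈ I} be a family of closed convex subsets of S such that each B^α contains some face S^i. Then ∩_{α∈I} B^α ≠ ∅ if and only if every subfamily of n+1 members of the family that covers the boundary of S also covers S. -/

import Mathlib

open Set Metric

section helpers

variable {E : Type*} [NormedAddCommGroup E] [NormedSpace ℝ E]

/-- IVT for a continuous linear functional on a convex set. -/
lemma exists_eq_on_convex {G : Set E} (hG : Convex ℝ G) {p q : E} (hp : p ∈ G) (hq : q ∈ G)
    (f : E →L[ℝ] ℝ) {c : ℝ} (h1 : f p ≤ c) (h2 : c ≤ f q) : ∃ z ∈ G, f z = c := by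
  have hcont : ContinuousOn (fun t : ℝ => f (p + t • (q - p))) (Set.Icc 0 1) := by
    fun_prop
  have := intermediate_value_Icc (zero_le_one (α := ℝ)) hcont
  have hc : c ∈ Set.Icc (f (p + (0:ℝ) • (q - p))) (f (p + (1:ℝ) • (q - p))) := by
    simp only [zero_smul, add_zero, one_smul]
    constructor
    · simpa using h1
    · simpa using h2
  obtain ⟨t, ht, hft⟩ := this hc
  refine ⟨p + t • (q - p), ?_, hft⟩
  have : p + t • (q - p) = (1 - t) • p + t • q := by module
  rw [this]
  exact hG hp hq (by linarith [ht.2]) ht.1 (by ring)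

/-- Berge's theorem: compact convex sets with convex union such that any `m-1` of them
intersect, all intersect. -/
lemma berge : ∀ m : ℕ, 2 ≤ m → ∀ C : Fin m → Set E, (∀ k, Convex ℝ (C k)) →
    (∀ k, IsCompact (C k)) → Convex ℝ (⋃ k, C k) →
    (∀ j, ∃ x, ∀ k, k ≠ j → x ∈ C k) → (⋂ k, C k).Nonempty := by
  intro m
  induction m with
  | zero => omega
  | succ m IH =>
    intro hm C hconv hcomp hU hdrop
    rcases eq_or_lt_of_le hm with heq | hlt
    · -- base case: m + 1 = 2
      obtain rfl : m = 1 := by omega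
      obtain ⟨p, hp⟩ := hdrop 0
      obtain ⟨q, hq⟩ := hdrop 1
      have hp1 : p ∈ C 1 := hp 1 (by decide)
      have hq0 : q ∈ C 0 := hq 0 (by decide)
      set γ : ℝ → E := fun t => q + t • (p - q) with hγ
      set φ : ℝ → ℝ := fun t => infDist (γ t) (C 0) - infDist (γ t) (C 1) with hφ
      have hγcont : Continuous γ := by fun_prop
      have hφcont : ContinuousOn φ (Set.Icc 0 1) :=
        (((continuous_infDist_pt (C 0)).comp hγcont).sub
          ((continuous_infDist_pt (C 1)).comp hγcont)).continuousOn
      have hφ0 : φ 0 ≤ 0 := by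
        have h0 : γ 0 = q := by simp [hγ]
        have : infDist (γ 0) (C 0) = 0 := by
          rw [h0]; exact infDist_zero_of_mem hq0
        simp [hφ, this, infDist_nonneg]
      have hφ1 : 0 ≤ φ 1 := by
        have h1 : γ 1 = p := by simp [hγ]
        have : infDist (γ 1) (C 1) = 0 := by
          rw [h1]; exact infDist_zero_of_mem hp1
        simp [hφ, this, infDist_nonneg]
      obtain ⟨t, ht, hft⟩ := intermediate_value_Icc (zero_le_one (α := ℝ)) hφcont ⟨hφ0, hφ1⟩
      have hzU : γ t ∈ ⋃ k, C k := by
        have hqU : q ∈ ⋃ k, C k := mem_iUnion.2 ⟨0, hq0⟩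
        have hpU : p ∈ ⋃ k, C k := mem_iUnion.2 ⟨1, hp1⟩
        have : γ t = (1 - t) • q + t • p := by simp [hγ]; module
        rw [this]
        exact hU hqU hpU (by linarith [ht.2]) ht.1 (by ring)
      have hd : infDist (γ t) (C 0) = 0 ∧ infDist (γ t) (C 1) = 0 := by
        obtain ⟨k, hk⟩ := mem_iUnion.1 hzU
        have hk01 : k = 0 ∨ k = 1 := by fin_cases k <;> simp
        have hor : γ t ∈ C 0 ∨ γ t ∈ C 1 := by
          rcases hk01 with rfl | rfl
          · exact Or.inl hk
          · exact Or.inr hk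
        have hsub : φ t = 0 := hft
        rcases hor with h | h
        · have h0 : infDist (γ t) (C 0) = 0 := infDist_zero_of_mem h
          refine ⟨h0, ?_⟩
          have := hsub
          simp only [hφ, h0, zero_sub, neg_eq_zero] at this
          exact this
        · have h1 : infDist (γ t) (C 1) = 0 := infDist_zero_of_mem h
          refine ⟨?_, h1⟩
          have := hsub
          simp only [hφ, h1, sub_zero] at this
          exact this
      have hz0 : γ t ∈ C 0 :=
        ((hcomp 0).isClosed.mem_iff_infDist_zero ⟨q, hq0⟩).2 hd.1
      have hz1 : γ t ∈ C 1 :=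
        ((hcomp 1).isClosed.mem_iff_infDist_zero ⟨p, hp1⟩).2 hd.2
      refine ⟨γ t, mem_iInter.2 ?_⟩
      intro k
      have hk01 : k = 0 ∨ k = 1 := by fin_cases k <;> simp
      rcases hk01 with rfl | rfl
      · exact hz0
      · exact hz1
    · -- inductive step: 2 ≤ m
      have hm' : 2 ≤ m := by omega
      by_contra hne
      rw [Set.not_nonempty_iff_eq_empty] at hne
      set D : Set E := ⋂ k : Fin (m+1), ⋂ (_ : k ≠ 0), C k with hD
      obtain ⟨x₀, hx₀⟩ := hdrop 0
      have hx₀D : x₀ ∈ D := by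
        rw [hD]; exact mem_iInter.2 fun k => mem_iInter.2 fun hk => hx₀ k hk
      have hDconv : Convex ℝ D := convex_iInter fun k => convex_iInter fun _ => hconv k
      have hDclosed : IsClosed D :=
        isClosed_iInter fun k => isClosed_iInter fun _ => (hcomp k).isClosed
      have h1ne0 : (1 : Fin (m+1)) ≠ 0 := by simp [Fin.ext_iff]; omega
      have hDsub : D ⊆ C 1 := by
        intro x hx
        exact (mem_iInter.1 (mem_iInter.1 hx 1)) h1ne0
      have hdisj : Disjoint (C 0) D := by
        rw [Set.disjoint_iff_inter_eq_empty, ← hne]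
        ext x
        simp only [Set.mem_inter_iff, Set.mem_iInter, hD]
        constructor
        · rintro ⟨h0, hrest⟩ k
          by_cases hk : k = 0
          · exact hk ▸ h0
          · exact hrest k hk
        · intro h
          exact ⟨h 0, fun k _ => h k⟩
      obtain ⟨f, u, v, hfu, huv, hfv⟩ :=
        geometric_hahn_banach_compact_closed (hconv 0) (hcomp 0) hDconv hDclosed hdisj
      set c : ℝ := (u + v) / 2 with hc
      have hc0 : ∀ x ∈ C 0, f x < c := fun x hx => by
        have := hfu x hx; simp [hc]; linarith
      have hcD : ∀ x ∈ D, c < f x := fun x hx => by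
        have := hfv x hx; simp [hc]; linarith
      have hHconv : Convex ℝ {x : E | f x = c} :=
        convex_hyperplane (f := fun x => f x) ⟨fun a b => by simp, fun r a => by simp⟩ c
      have hHclosed : IsClosed {x : E | f x = c} := isClosed_eq f.continuous continuous_const
      set C' : Fin m → Set E := fun i => C i.succ ∩ {x | f x = c} with hC'
      have hconv' : ∀ i, Convex ℝ (C' i) := fun i => (hconv _).inter hHconv
      have hcomp' : ∀ i, IsCompact (C' i) := fun i => (hcomp _).inter_right hHclosed
      have hU'eq : ⋃ i, C' i = (⋃ k, C k) ∩ {x | f x = c} := by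
        apply Set.Subset.antisymm
        · intro x hx
          obtain ⟨i, hi⟩ := mem_iUnion.1 hx
          exact ⟨mem_iUnion.2 ⟨i.succ, hi.1⟩, hi.2⟩
        · rintro x ⟨hxU, hxH⟩
          obtain ⟨k, hk⟩ := mem_iUnion.1 hxU
          have hkne : k ≠ 0 := by
            intro h
            exact absurd hxH (by simpa using (hc0 x (h ▸ hk)).ne)
          obtain ⟨i, rfl⟩ := Fin.exists_succ_eq.2 hkne
          exact mem_iUnion.2 ⟨i, hk, hxH⟩
      have hU' : Convex ℝ (⋃ i, C' i) := by
        rw [hU'eq]; exact hU.inter hHconv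
      have hdrop' : ∀ j, ∃ x, ∀ i, i ≠ j → x ∈ C' i := by
        intro j
        obtain ⟨p, hp⟩ := hdrop j.succ
        set G : Set E := ⋂ i : Fin m, ⋂ (_ : i ≠ j), C i.succ with hG
        have hGconv : Convex ℝ G := convex_iInter fun i => convex_iInter fun _ => hconv _
        have hpG : p ∈ G := mem_iInter.2 fun i => mem_iInter.2 fun hij =>
          hp i.succ (fun h => hij (Fin.succ_injective _ h))
        have hx₀G : x₀ ∈ G := mem_iInter.2 fun i => mem_iInter.2 fun _ =>
          hx₀ i.succ (Fin.succ_ne_zero i)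
        have hfp : f p ≤ c := (hc0 p (hp 0 (Fin.succ_ne_zero j).symm)).le
        have hfx₀ : c ≤ f x₀ := (hcD x₀ hx₀D).le
        obtain ⟨z, hzG, hzc⟩ := exists_eq_on_convex hGconv hpG hx₀G f hfp hfx₀
        exact ⟨z, fun i hij => ⟨(mem_iInter.1 (mem_iInter.1 hzG i)) hij, hzc⟩⟩
      obtain ⟨w, hw⟩ := IH hm' C' hconv' hcomp' hU' hdrop'
      have hwD : w ∈ D := by
        rw [hD]
        refine mem_iInter.2 fun k => mem_iInter.2 fun hk => ?_
        obtain ⟨i, rfl⟩ := Fin.exists_succ_eq.2 hk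
        exact (mem_iInter.1 hw i).1
      have hwc : f w = c := by
        have h0m : (0 : ℕ) < m := by omega
        exact (mem_iInter.1 hw ⟨0, h0m⟩).2
      exact absurd hwc (hcD w hwD).ne'

/-- Barycentric representation for points of the convex hull of a finite family. -/
lemma mem_convexHull_range_fin {m : ℕ} (a : Fin m → E) {x : E}
    (hx : x ∈ convexHull ℝ (Set.range a)) :
    ∃ w : Fin m → ℝ, (∀ j, 0 ≤ w j) ∧ ∑ j, w j = 1 ∧ ∑ j, w j • a j = x := by
  rw [convexHull_range_eq_exists_affineCombination] at hx
  obtain ⟨s, w, h0, h1, rfl⟩ := hx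
  refine ⟨fun j => if j ∈ s then w j else 0, fun j => ?_, ?_, ?_⟩
  · by_cases hj : j ∈ s <;> simp [hj, h0 j]
  · rw [Finset.sum_ite_mem, Finset.univ_inter, h1]
  · rw [s.affineCombination_eq_linear_combination a w h1]
    rw [show (∑ i ∈ s, w i • a i) = ∑ i ∈ Finset.univ ∩ s, w i • a i by
      rw [Finset.univ_inter]]
    rw [← Finset.sum_ite_mem Finset.univ s (fun j => w j • a j)]
    exact Finset.sum_congr rfl fun j _ => by by_cases hj : j ∈ s <;> simp [hj]

end helpers

theorem stmt_14 (n : ℕ) (a : Fin (n + 1) → EuclideanSpace ℝ (Fin n))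
    (ha : AffineIndependent ℝ a)
    (S : Set (EuclideanSpace ℝ (Fin n))) (hS : S = convexHull ℝ (Set.range a))
    (face : Fin (n + 1) → Set (EuclideanSpace ℝ (Fin n)))
    (hface : ∀ i, face i = convexHull ℝ (a '' {j | j ≠ i}))
    {ι : Type*} (B : ι → Set (EuclideanSpace ℝ (Fin n)))
    (hBclosed : ∀ α, IsClosed (B α)) (hBconv : ∀ α, Convex ℝ (B α))
    (hBS : ∀ α, B α ⊆ S)
    (hBface : ∀ α, ∃ i, face i ⊆ B α) :
    (⋂ α, B α).Nonempty ↔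
      ∀ g : Fin (n + 1) → ι, Function.Injective g →
        (⋃ i, face i) ⊆ (⋃ k, B (g k)) → S ⊆ ⋃ k, B (g k) := by
  classical
  have hSne : S.Nonempty := ⟨a 0, hS ▸ subset_convexHull ℝ _ ⟨0, rfl⟩⟩
  have hScomp : IsCompact S := hS ▸ (Set.finite_range a).isCompact_convexHull (𝕜 := ℝ)
  have hSconv : Convex ℝ S := hS ▸ convex_convexHull ℝ _
  have hvert : ∀ (j i : Fin (n + 1)), j ≠ i → a j ∈ face i := fun j i hji => by
    rw [hface i]; exact subset_convexHull ℝ _ ⟨j, hji, rfl⟩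
  constructor
  · -- forward direction
    rintro ⟨x, hx⟩ g hg hbd y hy
    have hxB : ∀ α, x ∈ B α := mem_iInter.1 hx
    have hxS : x ∈ convexHull ℝ (Set.range a) := hS ▸ hBS (g 0) (hxB (g 0))
    have hyS : y ∈ convexHull ℝ (Set.range a) := hS ▸ hy
    obtain ⟨lam, hlam0, hlam1, hlamx⟩ := mem_convexHull_range_fin a hxS
    obtain ⟨mu, hmu0, hmu1, hmuy⟩ := mem_convexHull_range_fin a hyS
    by_cases hcase : ∃ j, mu j < lam j
    · -- build the boundary point z
      set T : Finset (Fin (n + 1)) := Finset.univ.filter (fun j => mu j < lam j) with hT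
      have hTne : T.Nonempty := by
        obtain ⟨j, hj⟩ := hcase
        exact ⟨j, Finset.mem_filter.2 ⟨Finset.mem_univ j, hj⟩⟩
      obtain ⟨j₀, hj₀T, hj₀min⟩ := T.exists_min_image (fun j => lam j / (lam j - mu j)) hTne
      have hj₀ : mu j₀ < lam j₀ := (Finset.mem_filter.1 hj₀T).2
      have hd0 : 0 < lam j₀ - mu j₀ := by linarith
      set t : ℝ := lam j₀ / (lam j₀ - mu j₀) with htdef
      have ht1 : 1 ≤ t := (one_le_div hd0).2 (by linarith [hmu0 j₀])
      have ht0 : 0 < t := lt_of_lt_of_le zero_lt_one ht1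
      set ν : Fin (n + 1) → ℝ := fun j => lam j + t * (mu j - lam j) with hνdef
      have hν0 : ∀ j, 0 ≤ ν j := by
        intro j
        by_cases hj : mu j < lam j
        · have hjT : j ∈ T := Finset.mem_filter.2 ⟨Finset.mem_univ j, hj⟩
          have hmin := hj₀min j hjT
          have hdj : 0 < lam j - mu j := by linarith
          rw [le_div_iff₀ hdj] at hmin
          simp only [hνdef]
          nlinarith
        · simp only [hνdef]
          nlinarith [hlam0 j, mul_nonneg ht0.le (sub_nonneg.2 (not_lt.1 hj))]
      have hν1 : ∑ j, ν j = 1 := by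
        simp only [hνdef]
        rw [Finset.sum_add_distrib, ← Finset.mul_sum, Finset.sum_sub_distrib, hlam1, hmu1]
        ring
      have hνj₀ : ν j₀ = 0 := by
        have h1 : t * (lam j₀ - mu j₀) = lam j₀ := div_mul_cancel₀ _ hd0.ne'
        have h2 : ν j₀ = lam j₀ - t * (lam j₀ - mu j₀) := by simp only [hνdef]; ring
        rw [h2, h1, sub_self]
      set z : EuclideanSpace ℝ (Fin n) := ∑ j, ν j • a j with hzdef
      have hzface : z ∈ face j₀ := by
        rw [hface j₀]
        have hsum : ∑ j ∈ Finset.univ.erase j₀, ν j = 1 := by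
          rw [Finset.sum_erase _ hνj₀, hν1]
        have hmem := Finset.centerMass_mem_convexHull (Finset.univ.erase j₀)
          (fun i _ => hν0 i) (by rw [hsum]; exact zero_lt_one)
          (z := a) (s := a '' {j | j ≠ j₀}) (fun i hi => ⟨i, (Finset.mem_erase.1 hi).1, rfl⟩)
        rw [Finset.centerMass_eq_of_sum_1 _ _ hsum] at hmem
        have : ∑ j ∈ Finset.univ.erase j₀, ν j • a j = z := by
          rw [hzdef, Finset.sum_erase _ (by rw [hνj₀, zero_smul])]
        rwa [this] at hmem
      have hz : z = x + t • (y - x) := by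
        rw [← hlamx, ← hmuy, ← Finset.sum_sub_distrib, Finset.smul_sum,
          ← Finset.sum_add_distrib, hzdef]
        exact Finset.sum_congr rfl fun j _ => by simp only [hνdef]; module
      obtain ⟨k, hzk⟩ := mem_iUnion.1 (hbd (mem_iUnion.2 ⟨j₀, hzface⟩))
      have htinv0 : (0:ℝ) ≤ t⁻¹ := inv_nonneg.2 ht0.le
      have htinv1 : t⁻¹ ≤ 1 := by
        rw [inv_le_one_iff₀]; right; exact ht1
      have hyz : y = (1 - t⁻¹) • x + t⁻¹ • z := by
        rw [hz, smul_add, smul_smul, inv_mul_cancel₀ ht0.ne']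
        module
      refine mem_iUnion.2 ⟨k, ?_⟩
      rw [hyz]
      exact hBconv (g k) (hxB (g k)) hzk (by linarith) htinv0 (by ring)
    · -- y = x
      push_neg at hcase
      have heq : ∀ j, lam j = mu j := by
        by_contra hne
        push_neg at hne
        obtain ⟨j, hj⟩ := hne
        have hlt : ∑ j, lam j < ∑ j, mu j :=
          Finset.sum_lt_sum (fun i _ => hcase i)
            ⟨j, Finset.mem_univ j, lt_of_le_of_ne (hcase j) hj⟩
        rw [hlam1, hmu1] at hlt
        exact lt_irrefl 1 hlt
      have hxy : y = x := by
        rw [← hlamx, ← hmuy]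
        exact (Finset.sum_congr rfl fun j _ => by rw [heq j]).symm
      exact mem_iUnion.2 ⟨0, hxy ▸ hxB (g 0)⟩
  · -- reverse direction
    intro h
    have hBcomp : ∀ α, IsCompact (B α) := fun α =>
      IsCompact.of_isClosed_subset hScomp (hBclosed α) (hBS α)
    choose i₀ hi₀ using hBface
    have key : ∀ g : Fin (n + 1) → ι, (⋂ k, B (g k)).Nonempty := by
      intro g
      by_cases hsurj : Function.Surjective (fun k => i₀ (g k))
      · have hinj : Function.Injective (fun k => i₀ (g k)) :=
          Finite.injective_iff_surjective.2 hsurj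
        have hginj : Function.Injective g := fun k k' hkk' => hinj (by simp [hkk'])
        have hbd : (⋃ i, face i) ⊆ ⋃ k, B (g k) := by
          intro x hx
          obtain ⟨i, hxi⟩ := mem_iUnion.1 hx
          obtain ⟨k, hk⟩ := hsurj i
          exact mem_iUnion.2 ⟨k, hi₀ (g k) (by rw [show i₀ (g k) = i from hk]; exact hxi)⟩
        have hcov : S ⊆ ⋃ k, B (g k) := h g hginj hbd
        rcases Nat.lt_or_ge n 1 with hn | hn
        · obtain rfl : n = 0 := by omega
          obtain ⟨x, hxS⟩ := hSne
          obtain ⟨k, hk⟩ := mem_iUnion.1 (hcov hxS)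
          exact ⟨x, mem_iInter.2 fun k' => by rwa [show k' = k by rw [Fin.ext_iff]; omega]⟩
        · apply berge (n + 1) (by omega) (fun k => B (g k)) (fun k => hBconv _)
            (fun k => hBcomp _)
          · have : ⋃ k, B (g k) = S :=
              Set.Subset.antisymm (iUnion_subset fun k => hBS _) hcov
            rw [this]; exact hSconv
          · intro j
            refine ⟨a (i₀ (g j)), fun k hk => ?_⟩
            apply hi₀ (g k)
            apply hvert
            exact fun he => hk (hinj he.symm)
      · simp only [Function.Surjective, not_forall, not_exists] at hsurj
        obtain ⟨j, hj⟩ := hsurj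
        exact ⟨a j, mem_iInter.2 fun k => hi₀ (g k) (hvert j _ (Ne.symm (hj k)))⟩
    apply Convex.helly_theorem_compact' (𝕜 := ℝ) hBconv hBcomp
    intro I hIcard
    rcases I.eq_empty_or_nonempty with rfl | ⟨α₀, hα₀⟩
    · simp
    · have hcard : I.card ≤ n + 1 := by
        rwa [finrank_euclideanSpace_fin] at hIcard
      set g : Fin (n + 1) → ι := fun k =>
        if hk : (k : ℕ) < I.card then (I.equivFin.symm ⟨k, hk⟩ : ι) else α₀ with hgdef
      have hgI : ∀ β ∈ I, ∃ k, g k = β := by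
        intro β hβ
        set j : Fin I.card := I.equivFin ⟨β, hβ⟩ with hjdef
        refine ⟨⟨j.1, by omega⟩, ?_⟩
        simp only [hgdef, dif_pos j.2]
        have : (⟨j.1, j.2⟩ : Fin I.card) = j := rfl
        rw [this, hjdef, Equiv.symm_apply_apply]
      obtain ⟨x, hx⟩ := key g
      exact ⟨x, mem_iInter₂.2 fun β hβ => by
        obtain ⟨k, rfl⟩ := hgI β hβ
        exact mem_iInter.1 hx k⟩
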